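/- Let G be a graph and let m denote the number of ordered edges of G (i.e., m = 2|E(G)|). For every even k ≥ 4, the number of copies of the k-cycle C_k in G is at most m^{k/2}. -/
import Mathlib

private lemma cycle_adj_iff_aux {V : Type*} {G : SimpleGraph V} {k : ℕ}
    (H : G.Subgraph) (φ : H.coe ≃g SimpleGraph.cycleGraph k) (x y : V) :
    H.Adj x y ↔ ∃ a b : Fin k, (SimpleGraph.cycleGraph k).Adj a b ∧
      ((φ.symm a : H.verts) : V) = x ∧ ((φ.symm b : H.verts) : V) = y := by
  constructor
  · intro h
    refine ⟨φ ⟨x, H.edge_vert h⟩, φ ⟨y, H.edge_vert h.symm⟩, ?_, by simp, by simp⟩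
    exact φ.map_adj_iff.mpr h
  · rintro ⟨a, b, hab, rfl, rfl⟩
    exact φ.symm.map_adj_iff.mpr hab

private lemma cycle_verts_aux {V : Type*} {G : SimpleGraph V} {k : ℕ}
    (H : G.Subgraph) (φ : H.coe ≃g SimpleGraph.cycleGraph k) :
    H.verts = Set.range (fun a : Fin k => ((φ.symm a : H.verts) : V)) := by
  ext x
  constructor
  · intro hx
    exact ⟨φ ⟨x, hx⟩, by simp⟩
  · rintro ⟨a, rfl⟩
    exact (φ.symm a).2

/-- Let `G` be a graph with `m` ordered edges (`m = 2|E(G)|`).  For every even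
`k ≥ 4`, the number of copies of the `k`-cycle `C_k` in `G` (subgraphs of `G`
isomorphic to the cycle on `k` vertices) is at most `m^(k/2)`. -/
theorem stmt_3 {V : Type*} [Fintype V] [DecidableEq V]
    (G : SimpleGraph V) [DecidableRel G.Adj]
    (k : ℕ) (hk : 4 ≤ k) (hkeven : Even k)
    (m : ℕ) (hm : m = 2 * G.edgeFinset.card) :
    Nat.card {H : G.Subgraph // Nonempty (H.coe ≃g SimpleGraph.cycleGraph k)} ≤
      m ^ (k / 2) := by
  classical
  set S := {H : G.Subgraph // Nonempty (H.coe ≃g SimpleGraph.cycleGraph k)}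
  let φ : ∀ s : S, s.1.coe ≃g SimpleGraph.cycleGraph k := fun s => s.2.some
  let f : ∀ s : S, Fin k → V := fun s a => (((φ s).symm a : s.1.verts) : V)
  have h2 : ∀ i : Fin (k / 2), 2 * i.val + 1 < k := by
    intro i; have := i.2; omega
  have h1 : ∀ i : Fin (k / 2), 2 * i.val < k := fun i => by have := h2 i; omega
  have hcadj : ∀ i : Fin (k / 2),
      (SimpleGraph.cycleGraph k).Adj ⟨2 * i.val, h1 i⟩ ⟨2 * i.val + 1, h2 i⟩ := by
    intro i
    obtain ⟨K, hK⟩ := hkeven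
    rw [SimpleGraph.cycleGraph_adj']
    right
    have hle : 2 * i.val < k := h1 i
    rw [Fin.sub_def]
    simp only []
    have hsum : k - 2 * i.val + (2 * i.val + 1) = k + 1 := by omega
    rw [hsum, Nat.add_mod_left, Nat.mod_eq_of_lt (by omega)]
  have hHadj : ∀ (s : S) (i : Fin (k / 2)),
      s.1.Adj (f s ⟨2 * i.val, h1 i⟩) (f s ⟨2 * i.val + 1, h2 i⟩) := by
    intro s i
    exact (cycle_adj_iff_aux s.1 (φ s) _ _).mpr ⟨_, _, hcadj i, rfl, rfl⟩
  let F : S → (Fin (k / 2) → G.Dart) := fun s i =>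
    ⟨(f s ⟨2 * i.val, h1 i⟩, f s ⟨2 * i.val + 1, h2 i⟩), (hHadj s i).adj_sub⟩
  have hFinj : Function.Injective F := by
    intro s t hst
    have hf : f s = f t := by
      funext j
      obtain ⟨K, hK⟩ := hkeven
      have hjk := j.2
      rcases Nat.even_or_odd j.val with ⟨c, hc⟩ | ⟨c, hc⟩
      · have hjv : j = ⟨2 * (j.val / 2), h1 ⟨j.val / 2, by omega⟩⟩ := by
          apply Fin.ext; simp only []; omega
        rw [hjv]
        exact congrArg (fun d => d.toProd.1) (congrFun hst ⟨j.val / 2, by omega⟩)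
      · have hjv : j = ⟨2 * (j.val / 2) + 1, h2 ⟨j.val / 2, by omega⟩⟩ := by
          apply Fin.ext; simp only []; omega
        rw [hjv]
        exact congrArg (fun d => d.toProd.2) (congrFun hst ⟨j.val / 2, by omega⟩)
    apply Subtype.ext
    apply SimpleGraph.Subgraph.ext
    · rw [cycle_verts_aux s.1 (φ s), cycle_verts_aux t.1 (φ t)]
      exact congrArg Set.range hf
    · funext x y
      apply propext
      rw [cycle_adj_iff_aux s.1 (φ s), cycle_adj_iff_aux t.1 (φ t)]
      constructor
      · rintro ⟨a, b, hab, hx, hy⟩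
        exact ⟨a, b, hab, (congrFun hf a).symm.trans hx, (congrFun hf b).symm.trans hy⟩
      · rintro ⟨a, b, hab, hx, hy⟩
        exact ⟨a, b, hab, (congrFun hf a).trans hx, (congrFun hf b).trans hy⟩
  calc Nat.card S ≤ Nat.card (Fin (k / 2) → G.Dart) :=
        Nat.card_le_card_of_injective F hFinj
    _ = m ^ (k / 2) := by
        rw [Nat.card_eq_fintype_card, Fintype.card_fun, Fintype.card_fin,
          SimpleGraph.dart_card_eq_twice_card_edges, hm]
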